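/- Let Λ be a finite, non-zero measure on [0,1] with ∫_{[0,1]} p^{−1} Λ(dp) < ∞, and define f(y) := ∫_{[0,1]} (1 − (1−p)^{e^y}) e^{−y} p^{−2} Λ(dp) for y ∈ ℝ. Then f(y) is finite for every y ∈ ℝ, f is positive, nonincreasing and continuous on ℝ, and f(y) → 0 as y → ∞. -/

import Mathlib

open MeasureTheory Filter Set

lemma myF_anti : AntitoneOn (fun x : ℝ => (1 - Real.exp (-x)) / x) (Set.Ioi 0) := by
  have hderiv : ∀ x ∈ interior (Set.Ioi (0:ℝ)),
      HasDerivAt (fun x : ℝ => (1 - Real.exp (-x)) / x)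
        ((Real.exp (-x) * x - (1 - Real.exp (-x)) * 1) / x ^ 2) x := by
    intro x hx
    rw [interior_Ioi] at hx
    have h1 : HasDerivAt (fun x : ℝ => 1 - Real.exp (-x)) (Real.exp (-x)) x := by
      have := (Real.hasDerivAt_exp (-x)).comp x (hasDerivAt_neg x)
      have h := (hasDerivAt_const x (1:ℝ)).sub this
      simp only [mul_neg, mul_one, zero_sub, neg_neg] at h
      exact h
    exact h1.div (hasDerivAt_id x) (ne_of_gt hx)
  apply antitoneOn_of_deriv_nonpos (convex_Ioi 0)
  · apply ContinuousOn.div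
    · exact (continuous_const.sub (Real.continuous_exp.comp continuous_neg)).continuousOn
    · exact continuousOn_id
    · intro x hx; exact ne_of_gt hx
  · intro x hx
    exact (hderiv x hx).differentiableAt.differentiableWithinAt
  · intro x hx
    rw [(hderiv x hx).deriv]
    rw [interior_Ioi] at hx
    apply div_nonpos_of_nonpos_of_nonneg _ (sq_nonneg x)
    have h2 : Real.exp (-x) * (x + 1) ≤ 1 := by
      have h3 : x + 1 ≤ Real.exp x := Real.add_one_le_exp x
      calc Real.exp (-x) * (x + 1) ≤ Real.exp (-x) * Real.exp x :=
            mul_le_mul_of_nonneg_left h3 (Real.exp_nonneg _)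
        _ = 1 := by rw [← Real.exp_add]; simp
    nlinarith [Real.exp_nonneg (-x)]

lemma my_key_mono {q r s : ℝ} (hq0 : 0 ≤ q) (hq1 : q ≤ 1) (hr : 0 < r) (hrs : r ≤ s) :
    (1 - q ^ s) / s ≤ (1 - q ^ r) / r := by
  have hs : 0 < s := lt_of_lt_of_le hr hrs
  rcases eq_or_lt_of_le hq1 with h1 | h1
  · subst h1; simp [Real.one_rpow]
  rcases eq_or_lt_of_le hq0 with h0 | h0
  · subst h0
    rw [Real.zero_rpow (ne_of_gt hr), Real.zero_rpow (ne_of_gt hs)]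
    simpa using one_div_le_one_div_of_le hr hrs
  · have hlq : Real.log q < 0 := Real.log_neg h0 h1
    set a : ℝ := -Real.log q with ha
    have ha0 : 0 < a := by simp [ha]; linarith
    have hq_rpow : ∀ t : ℝ, 0 < t → q ^ t = Real.exp (-(t * a)) := by
      intro t ht
      rw [Real.rpow_def_of_pos h0]
      congr 1; rw [ha]; ring
    have key : (1 - Real.exp (-(s * a))) / (s * a) ≤ (1 - Real.exp (-(r * a))) / (r * a) :=
      myF_anti (mem_Ioi.mpr (mul_pos hr ha0)) (mem_Ioi.mpr (mul_pos hs ha0))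
        (mul_le_mul_of_nonneg_right hrs ha0.le)
    rw [hq_rpow r hr, hq_rpow s hs]
    have h1' : (1 - Real.exp (-(s * a))) / s = a * ((1 - Real.exp (-(s * a))) / (s * a)) := by
      field_simp
    have h2' : (1 - Real.exp (-(r * a))) / r = a * ((1 - Real.exp (-(r * a))) / (r * a)) := by
      field_simp
    rw [h1', h2']
    exact mul_le_mul_of_nonneg_left key ha0.le

lemma my_num_nonneg {p r : ℝ} (hp0 : 0 ≤ p) (hp1 : p ≤ 1) (hr : 0 ≤ r) :
    0 ≤ 1 - (1 - p) ^ r := by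
  have := Real.rpow_le_one (by linarith : (0:ℝ) ≤ 1 - p) (by linarith) hr
  linarith

lemma my_num_le {p r : ℝ} (hp0 : 0 ≤ p) (hp1 : p ≤ 1) (hr : 0 < r) :
    1 - (1 - p) ^ r ≤ (r + 1) * p := by
  rcases le_or_gt 1 r with h | h
  · have := one_add_mul_self_le_rpow_one_add (by linarith : (-1:ℝ) ≤ -p) h
    have h2 : 1 + r * (-p) ≤ (1 - p) ^ r := by
      have he : (1:ℝ) + -p = 1 - p := by ring
      rwa [he] at this
    nlinarith
  · rcases eq_or_lt_of_le hp1 with h1 | h1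
    · subst h1
      rw [sub_self, Real.zero_rpow (ne_of_gt hr)]; linarith
    · have h2 : (1 - p) ^ (1:ℝ) ≤ (1 - p) ^ r :=
        Real.rpow_le_rpow_of_exponent_ge (by linarith) (by linarith) h.le
      rw [Real.rpow_one] at h2
      nlinarith

/-- Let `Λ` be a finite, non-zero measure on `[0,1]` satisfying the dust condition
`∫_{[0,1]} p⁻¹ Λ(dp) < ∞` (with `p⁻¹ = ∞` at `p = 0`), and define
`f y := ∫_{[0,1]} (1 - (1-p)^(e^y)) e^{-y} p⁻² Λ(dp)`.  Then `f y` is finite for every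
`y` (i.e. the integrand is integrable), `f` is positive, nonincreasing and continuous
on `ℝ`, and `f y → 0` as `y → ∞`. -/
theorem f_properties
    (Λ : Measure ℝ) [IsFiniteMeasure Λ] (hΛ : Λ ≠ 0) (hsupp : Λ (Icc (0 : ℝ) 1)ᶜ = 0)
    (hdust : (∫⁻ p in Icc (0 : ℝ) 1, (ENNReal.ofReal p)⁻¹ ∂Λ) < ⊤)
    (f : ℝ → ℝ)
    (hf : ∀ y : ℝ,
      f y = ∫ p in Icc (0 : ℝ) 1, (1 - (1 - p) ^ Real.exp y) / Real.exp y / p ^ 2 ∂Λ) :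
    (∀ y : ℝ,
        IntegrableOn (fun p : ℝ => (1 - (1 - p) ^ Real.exp y) / Real.exp y / p ^ 2)
          (Icc (0 : ℝ) 1) Λ) ∧
      (∀ y : ℝ, 0 < f y) ∧ Antitone f ∧ Continuous f ∧ Tendsto f atTop (nhds 0) := by
  set μ := Λ.restrict (Icc (0:ℝ) 1) with hμdef
  -- Λ has no atom at 0
  have h0 : Λ ({0} : Set ℝ) = 0 := by
    by_contra h
    have hsub : ({(0:ℝ)} : Set ℝ) ⊆ Icc 0 1 := by simp
    have hle : (∫⁻ p in ({0} : Set ℝ), (ENNReal.ofReal p)⁻¹ ∂Λ)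
        ≤ ∫⁻ p in Icc (0:ℝ) 1, (ENNReal.ofReal p)⁻¹ ∂Λ := lintegral_mono_set hsub
    rw [lintegral_singleton] at hle
    simp only [ENNReal.ofReal_zero, ENNReal.inv_zero] at hle
    rw [ENNReal.top_mul h] at hle
    exact absurd (lt_of_le_of_lt hle hdust) (by simp)
  have hae : ∀ᵐ p ∂μ, 0 < p := by
    have h1 : ∀ᵐ p ∂μ, p ∈ Icc (0:ℝ) 1 := ae_restrict_mem measurableSet_Icc
    have h2 : ∀ᵐ p ∂μ, p ≠ 0 := by
      have hres : μ ({0} : Set ℝ) = 0 := by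
        rw [hμdef, Measure.restrict_apply (measurableSet_singleton _)]
        exact measure_mono_null (inter_subset_left) h0
      rw [ae_iff]
      simpa using hres
    filter_upwards [h1, h2] with p hp hne
    exact lt_of_le_of_ne hp.1 (Ne.symm hne)
  -- measurability
  have hmeas : ∀ y : ℝ,
      Measurable (fun p : ℝ => (1 - (1 - p) ^ Real.exp y) / Real.exp y / p ^ 2) := by
    intro y
    have hc : Continuous fun p : ℝ => (1 - p) ^ Real.exp y :=
      (Real.continuous_rpow_const (Real.exp_nonneg y)).comp (continuous_const.sub continuous_id)
    exact (((continuous_const.sub hc).measurable).div_const _).div (measurable_id.pow_const 2)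
  -- the basic bound
  have hbound : ∀ y : ℝ, ∀ p ∈ Icc (0:ℝ) 1,
      ‖(1 - (1 - p) ^ Real.exp y) / Real.exp y / p ^ 2‖ ≤ (1 + Real.exp (-y)) * p⁻¹ := by
    intro y p hp
    obtain ⟨hp0, hp1⟩ := hp
    have hr : 0 < Real.exp y := Real.exp_pos y
    rcases eq_or_lt_of_le hp0 with h | h
    · rw [← h]
      simp [Real.one_rpow]
    · have hnum0 := my_num_nonneg hp0 hp1 hr.le
      have hnum1 := my_num_le hp0 hp1 hr
      have hg0 : 0 ≤ (1 - (1 - p) ^ Real.exp y) / Real.exp y / p ^ 2 :=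
        div_nonneg (div_nonneg hnum0 hr.le) (sq_nonneg p)
      rw [Real.norm_eq_abs, abs_of_nonneg hg0]
      have hle : (1 - (1 - p) ^ Real.exp y) / Real.exp y / p ^ 2
          ≤ ((Real.exp y + 1) * p) / Real.exp y / p ^ 2 := by
        gcongr
      have heq : ((Real.exp y + 1) * p) / Real.exp y / p ^ 2
          = (1 + Real.exp (-y)) * p⁻¹ := by
        rw [Real.exp_neg]
        field_simp
      linarith
  -- integrability of p⁻¹
  have hint_inv : IntegrableOn (fun p : ℝ => p⁻¹) (Icc (0:ℝ) 1) Λ := by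
    constructor
    · exact measurable_inv.aestronglyMeasurable
    · rw [HasFiniteIntegral]
      have hcong : (∫⁻ p, ‖(p : ℝ)⁻¹‖ₑ ∂μ) = ∫⁻ p, (ENNReal.ofReal p)⁻¹ ∂μ := by
        apply lintegral_congr_ae
        filter_upwards [hae] with p hp
        rw [Real.enorm_eq_ofReal (inv_nonneg.mpr hp.le), ENNReal.ofReal_inv_of_pos hp]
      exact lt_of_eq_of_lt hcong hdust
  -- integrability of the integrand
  have hInt : ∀ y : ℝ,
      IntegrableOn (fun p : ℝ => (1 - (1 - p) ^ Real.exp y) / Real.exp y / p ^ 2)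
        (Icc (0:ℝ) 1) Λ := by
    intro y
    refine Integrable.mono' (hint_inv.const_mul (1 + Real.exp (-y)))
      ((hmeas y).aestronglyMeasurable) ?_
    filter_upwards [ae_restrict_mem measurableSet_Icc] with p hp
    exact hbound y p hp
  refine ⟨hInt, ?_, ?_, ?_, ?_⟩
  -- positivity
  · intro y
    rw [hf y]
    have hr : 0 < Real.exp y := Real.exp_pos y
    have hnn : 0 ≤ᵐ[μ] fun p : ℝ => (1 - (1 - p) ^ Real.exp y) / Real.exp y / p ^ 2 := by
      filter_upwards [ae_restrict_mem measurableSet_Icc] with p hp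
      exact div_nonneg (div_nonneg (my_num_nonneg hp.1 hp.2 hr.le) hr.le) (sq_nonneg p)
    rw [setIntegral_pos_iff_support_of_nonneg_ae hnn (hInt y)]
    have hsub : Ioc (0:ℝ) 1 ⊆
        Function.support (fun p : ℝ => (1 - (1 - p) ^ Real.exp y) / Real.exp y / p ^ 2)
          ∩ Icc 0 1 := by
      intro p hp
      refine ⟨?_, hp.1.le, hp.2⟩
      have hnum : 0 < 1 - (1 - p) ^ Real.exp y := by
        have := Real.rpow_lt_one (by linarith [hp.2] : (0:ℝ) ≤ 1 - p)
          (by linarith [hp.1] : (1:ℝ) - p < 1) hr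
        linarith
      exact ne_of_gt (div_pos (div_pos hnum hr) (pow_pos hp.1 2))
    refine lt_of_lt_of_le ?_ (measure_mono hsub)
    have huniv : Λ univ ≠ 0 := fun hu => hΛ (Measure.measure_univ_eq_zero.mp hu)
    have hIcc : 0 < Λ (Icc (0:ℝ) 1) := by
      rcases eq_or_lt_of_le (zero_le : 0 ≤ Λ (Icc (0:ℝ) 1)) with h | h
      · exfalso
        apply huniv
        have : Λ univ ≤ Λ (Icc (0:ℝ) 1) + Λ (Icc (0:ℝ) 1)ᶜ := by
          refine le_trans (measure_mono ?_) (measure_union_le _ _)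
          intro x _; exact (em (x ∈ Icc (0:ℝ) 1)).imp id id
        rw [hsupp, ← h, add_zero] at this
        exact le_antisymm this zero_le
      · exact h
    have hsplit : Λ (Icc (0:ℝ) 1) ≤ Λ ({0} : Set ℝ) + Λ (Ioc (0:ℝ) 1) := by
      refine le_trans (measure_mono ?_) (measure_union_le _ _)
      intro x hx
      rcases eq_or_lt_of_le hx.1 with h | h
      · exact Or.inl (by simp [← h])
      · exact Or.inr ⟨h, hx.2⟩
    rw [h0, zero_add] at hsplit
    exact lt_of_lt_of_le hIcc hsplit
  -- antitone
  · intro y1 y2 h12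
    rw [hf y1, hf y2]
    refine setIntegral_mono_on (hInt y2) (hInt y1) measurableSet_Icc ?_
    intro p hp
    have key := my_key_mono (by linarith [hp.2] : (0:ℝ) ≤ 1 - p)
      (by linarith [hp.1] : (1:ℝ) - p ≤ 1) (Real.exp_pos y1) (Real.exp_le_exp.mpr h12)
    have := mul_le_mul_of_nonneg_right key (inv_nonneg.mpr (sq_nonneg p))
    simpa [div_eq_mul_inv] using this
  -- continuity
  · have hfe : f = fun y => ∫ p in Icc (0:ℝ) 1,
        (1 - (1 - p) ^ Real.exp y) / Real.exp y / p ^ 2 ∂Λ := funext hf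
    rw [hfe, continuous_iff_continuousAt]
    intro y₀
    refine continuousAt_of_dominated
      (Filter.Eventually.of_forall fun y => (hmeas y).aestronglyMeasurable)
      ?_ (hint_inv.const_mul (1 + Real.exp (-(y₀ - 1)))) ?_
    · filter_upwards [Ioo_mem_nhds (by linarith : y₀ - 1 < y₀) (by linarith : y₀ < y₀ + 1)]
        with y hy
      filter_upwards [ae_restrict_mem measurableSet_Icc] with p hp
      refine le_trans (hbound y p hp) ?_
      refine mul_le_mul_of_nonneg_right ?_ (inv_nonneg.mpr hp.1)
      have := Real.exp_le_exp.mpr (by linarith [hy.1] : -y ≤ -(y₀ - 1))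
      linarith
    · filter_upwards [ae_restrict_mem measurableSet_Icc] with p hp
      have hb : Continuous fun y : ℝ => ((1:ℝ) - p) ^ Real.exp y := by
        rcases eq_or_lt_of_le hp.2 with h | h
        · have hz : ∀ y : ℝ, ((1:ℝ) - p) ^ Real.exp y = 0 := fun y => by
            rw [← h, sub_self, Real.zero_rpow (Real.exp_ne_zero y)]
          exact continuous_const.congr fun y => (hz y).symm
        · have hpos : 0 < 1 - p := by linarith
          have hz : ∀ y : ℝ, ((1:ℝ) - p) ^ Real.exp y
              = Real.exp (Real.log (1 - p) * Real.exp y) := fun y =>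
            Real.rpow_def_of_pos hpos _
          exact (Real.continuous_exp.comp
            (continuous_const.mul Real.continuous_exp)).congr fun y => (hz y).symm
      exact (((continuous_const.sub hb).div Real.continuous_exp
        (fun y => Real.exp_ne_zero y)).div_const _).continuousAt
  -- tendsto 0
  · have hfe : f = fun y => ∫ p in Icc (0:ℝ) 1,
        (1 - (1 - p) ^ Real.exp y) / Real.exp y / p ^ 2 ∂Λ := funext hf
    rw [hfe]
    have hmain := tendsto_integral_filter_of_dominated_convergence (μ := μ)
      (F := fun y (p : ℝ) => (1 - (1 - p) ^ Real.exp y) / Real.exp y / p ^ 2)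
      (f := fun _ : ℝ => (0:ℝ)) (l := atTop)
      (fun p : ℝ => 2 * p⁻¹)
      (Filter.Eventually.of_forall fun y => (hmeas y).aestronglyMeasurable)
      ?_ (hint_inv.const_mul 2) ?_
    · simpa using hmain
    · filter_upwards [Filter.eventually_ge_atTop (0:ℝ)] with y hy
      filter_upwards [ae_restrict_mem measurableSet_Icc] with p hp
      refine le_trans (hbound y p hp) ?_
      refine mul_le_mul_of_nonneg_right ?_ (inv_nonneg.mpr hp.1)
      have h1 : Real.exp (-y) ≤ 1 := Real.exp_le_one_iff.mpr (by linarith)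
      linarith
    · filter_upwards [hae, ae_restrict_mem measurableSet_Icc] with p hp hpIcc
      have hp2 : 0 < p ^ 2 := pow_pos hp 2
      apply squeeze_zero (g := fun y => Real.exp (-y) / p ^ 2)
      · intro y
        exact div_nonneg (div_nonneg (my_num_nonneg hpIcc.1 hpIcc.2 (Real.exp_pos y).le)
          (Real.exp_pos y).le) (sq_nonneg p)
      · intro y
        have hr : 0 < Real.exp y := Real.exp_pos y
        have hnum : 1 - (1 - p) ^ Real.exp y ≤ 1 := by
          have := Real.rpow_nonneg (by linarith [hpIcc.2] : (0:ℝ) ≤ 1 - p) (Real.exp y)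
          linarith
        have h1 : (1 - (1 - p) ^ Real.exp y) / Real.exp y ≤ Real.exp (-y) := by
          rw [Real.exp_neg, inv_eq_one_div]
          gcongr
        gcongr
      · simpa using Real.tendsto_exp_neg_atTop_nhds_zero.div_const (p ^ 2)
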